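/- Let F : [0,1] → [0,1] be a continuous, strictly increasing surjection whose derivative F′ exists and equals 0 Lebesgue-almost everywhere on [0,1], and let f : ℝ → ℝ be an exponential like function. Then f ∘ F : [0,1] → ℝ is strongly singular: it is continuous, of bounded variation, its derivative exists and equals 0 Lebesgue-almost everywhere on [0,1], and it is not constant on any nondegenerate subinterval of [0,1]. -/

import Mathlib

open MeasureTheory Set

/-- `f : ℝ → ℝ` is exponential like (of some range `m ≥ 1`) if
`f x = ∑ i, a i * exp (β i * x)` with the `β i` distinct and nonzero and the `a i` nonzero. -/
def ExpLike (f : ℝ → ℝ) : Prop :=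
  ∃ m : ℕ, 1 ≤ m ∧ ∃ a β : Fin m → ℝ,
    (∀ i, a i ≠ 0) ∧ (∀ i, β i ≠ 0) ∧ Function.Injective β ∧
    f = fun x => ∑ i, a i * Real.exp (β i * x)

/-- The exponential character `x ↦ exp (b x)` as a monoid hom from `Multiplicative ℝ`. -/
noncomputable def expChar (b : ℝ) : Multiplicative ℝ →* ℝ where
  toFun := fun x => Real.exp (b * x.toAdd)
  map_one' := by simp
  map_mul' := fun x y => by
    simp [toAdd_mul, mul_add, Real.exp_add]

theorem expChar_injective : Function.Injective expChar := by
  intro b b' h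
  have := DFunLike.congr_fun h (Multiplicative.ofAdd 1)
  simpa [expChar, Real.exp_eq_exp] using this

/-- If `F : [0,1] → [0,1]` is a continuous strictly increasing surjection
with derivative `0` Lebesgue-a.e., and `f` is exponential like, then `f ∘ F` is strongly
singular: continuous, of bounded variation, with derivative existing and equal to `0`
Lebesgue-a.e. on `[0,1]`, and not constant on any nondegenerate subinterval of `[0,1]`. -/
theorem explike_comp_singular_is_stronglySingular
    (F : ℝ → ℝ) (hFc : ContinuousOn F (Icc 0 1)) (hFm : StrictMonoOn F (Icc 0 1))
    (hFsurj : F '' Icc 0 1 = Icc 0 1)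
    (hF' : ∀ᵐ x ∂(volume.restrict (Icc (0:ℝ) 1)), HasDerivAt F 0 x)
    (f : ℝ → ℝ) (hf : ExpLike f) :
    ContinuousOn (f ∘ F) (Icc 0 1) ∧ BoundedVariationOn (f ∘ F) (Icc 0 1) ∧
    (∀ᵐ x ∂(volume.restrict (Icc (0:ℝ) 1)), HasDerivAt (f ∘ F) 0 x) ∧
    ∀ a b : ℝ, 0 ≤ a → a < b → b ≤ 1 →
      ∃ x ∈ Icc a b, ∃ y ∈ Icc a b, (f ∘ F) x ≠ (f ∘ F) y := by
  obtain ⟨m, hm, a, β, ha, hβ, hβinj, hfeq⟩ := hf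
  -- derivative of f
  set f' : ℝ → ℝ := fun x => ∑ i, a i * β i * Real.exp (β i * x) with hf'def
  have hder : ∀ x : ℝ, HasDerivAt f (f' x) x := by
    intro x
    rw [hfeq, hf'def]
    apply HasDerivAt.fun_sum
    intro i _
    have h2 := ((Real.hasDerivAt_exp (β i * x)).comp x
      ((hasDerivAt_id x).const_mul (β i))).const_mul (a i)
    exact h2.congr_deriv (by ring)
  have hcf : Continuous f := by
    rw [hfeq]
    exact continuous_finset_sum _ fun i _ =>
      continuous_const.mul (Real.continuous_exp.comp (continuous_const.mul continuous_id))
  have hcf' : Continuous f' := by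
    rw [hf'def]
    exact continuous_finset_sum _ fun i _ =>
      continuous_const.mul (Real.continuous_exp.comp (continuous_const.mul continuous_id))
  have hmaps : MapsTo F (Icc 0 1) (Icc (0:ℝ) 1) := fun x hx => by
    rw [← hFsurj]; exact mem_image_of_mem F hx
  refine ⟨hcf.comp_continuousOn hFc, ?_, ?_, ?_⟩
  · -- bounded variation
    have hFBV : BoundedVariationOn F (Icc 0 1) := by
      have h01 : (0:ℝ) ∈ Icc (0:ℝ) 1 := left_mem_Icc.2 zero_le_one
      have h11 : (1:ℝ) ∈ Icc (0:ℝ) 1 := right_mem_Icc.2 zero_le_one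
      have := hFm.monotoneOn.eVariationOn_le h01 h11
      rw [inter_self] at this
      exact ne_top_of_le_ne_top ENNReal.ofReal_ne_top this
    obtain ⟨C, hC⟩ := isCompact_Icc.exists_bound_of_continuousOn hcf'.continuousOn
    have hLip : LipschitzOnWith C.toNNReal f (Icc 0 1) := by
      apply (convex_Icc (0:ℝ) 1).lipschitzOnWith_of_nnnorm_hasDerivWithin_le
        (fun x hx => (hder x).hasDerivWithinAt)
      intro x hx
      have hC0 : 0 ≤ C := le_trans (norm_nonneg _) (hC 0 (left_mem_Icc.2 zero_le_one))
      have : ‖f' x‖ ≤ C := hC x hx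
      rw [← NNReal.coe_le_coe, coe_nnnorm, Real.coe_toNNReal C hC0]
      exact this
    exact hLip.comp_boundedVariationOn hmaps hFBV
  · -- a.e. zero derivative
    filter_upwards [hF'] with x hx
    simpa using (hder (F x)).comp x hx
  · -- not constant on any subinterval
    intro p q hp0 hpq hq1
    by_contra h
    push_neg at h
    have hsub : Icc p q ⊆ Icc (0:ℝ) 1 := Icc_subset_Icc hp0 hq1
    have hpmem : p ∈ Icc p q := left_mem_Icc.2 hpq.le
    have hqmem : q ∈ Icc p q := right_mem_Icc.2 hpq.le
    set c := f (F p) with hc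
    have hconst : ∀ y ∈ Icc (F p) (F q), f y = c := by
      intro y hy
      obtain ⟨x, hx, rfl⟩ := intermediate_value_Icc hpq.le (hFc.mono hsub) hy
      exact (h x hx p hpmem)
    have hFpq : F p < F q := hFm (hsub hpmem) (hsub hqmem) hpq
    -- f is analytic
    have hfa : AnalyticOnNhd ℝ f univ := by
      intro x _
      rw [hfeq]
      exact Finset.analyticAt_fun_sum _ fun i _ =>
        analyticAt_const.mul ((analyticAt_const.mul analyticAt_id).rexp)
    -- f is globally constant
    have hev : f =ᶠ[nhds ((F p + F q) / 2)] fun _ => c := by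
      have hmem : Icc (F p) (F q) ∈ nhds ((F p + F q) / 2) :=
        Icc_mem_nhds (by linarith) (by linarith)
      filter_upwards [hmem] with y hy using hconst y hy
    have hall : ∀ x : ℝ, f x = c := by
      intro x
      have := hfa.eq_of_eventuallyEq (g := fun _ => c)
        (fun z _ => analyticAt_const) hev
      exact congrFun this x
    -- linear independence of characters gives a contradiction
    set B : Fin (m + 1) → ℝ := Fin.cons 0 β with hB
    have hBinj : Function.Injective B := by
      rw [hB, Fin.cons_injective_iff]
      refine ⟨?_, hβinj⟩
      rintro ⟨i, hi⟩
      exact hβ i hi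
    have hLI : LinearIndependent ℝ fun i : Fin (m + 1) =>
        ((expChar (B i) : Multiplicative ℝ →* ℝ) : Multiplicative ℝ → ℝ) :=
      (linearIndependent_monoidHom (Multiplicative ℝ) ℝ).comp
        (fun i => expChar (B i)) (expChar_injective.comp hBinj)
    set g : Fin (m + 1) → ℝ := Fin.cons (-c) a with hg
    have hsum : ∑ i, g i • ((expChar (B i) : Multiplicative ℝ →* ℝ) :
        Multiplicative ℝ → ℝ) = 0 := by
      funext x
      have hfx : f (Multiplicative.toAdd x) = c := hall _
      rw [hfeq] at hfx
      simp only [Finset.sum_apply, Pi.smul_apply, smul_eq_mul, Pi.zero_apply]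
      rw [Fin.sum_univ_succ]
      simp only [hg, hB, Fin.cons_zero, Fin.cons_succ, expChar, MonoidHom.coe_mk,
        OneHom.coe_mk, zero_mul, Real.exp_zero, mul_one]
      simp only at hfx
      linarith [hfx]
    have hzero := Fintype.linearIndependent_iff.mp hLI g hsum
    have : a ⟨0, hm⟩ = 0 := by
      have := hzero (Fin.succ ⟨0, hm⟩)
      rwa [hg, Fin.cons_succ] at this
    exact ha _ this
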